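/- Let A be a real n×d matrix with rows a_1,…,a_n, let γ ∈ (0,1) and i ∈ {1,…,n}, and let W be the n×n diagonal matrix with W_{ii} = √(1−γ) and W_{jj} = 1 for all j ≠ i. Let τ_{ij}(A) denote the j-th entry of the unique minimum-norm solution x of Aᵀx = a_i. Then for every j ≠ i, τ_j(WA)·(1 − γ·τ_i(A)) = τ_j(A)·(1 − γ·τ_i(A)) + γ·τ_{ij}(A)², i.e. τ_j(WA) = τ_j(A) + γτ_{ij}(A)²/(1−γτ_i(A)), and consequently τ_j(WA) ≥ τ_j(A). -/

import Mathlib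

open Matrix Finset

noncomputable def lev {n d : ℕ} (M : Matrix (Fin n) (Fin d) ℝ) (i : Fin n) : ℝ :=
  sInf {t : ℝ | ∃ x : Fin n → ℝ, Mᵀ *ᵥ x = M i ∧ t = ∑ j, (x j) ^ 2}

lemma lev_le {n d : ℕ} (M : Matrix (Fin n) (Fin d) ℝ) (i : Fin n) (z : Fin n → ℝ)
    (hz : Mᵀ *ᵥ z = M i) : lev M i ≤ ∑ k, (z k) ^ 2 :=
  csInf_le ⟨0, by rintro t ⟨y, -, rfl⟩; positivity⟩ ⟨z, hz, rfl⟩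

lemma sol_single {n d : ℕ} (M : Matrix (Fin n) (Fin d) ℝ) (i : Fin n) :
    Mᵀ *ᵥ (Pi.single i 1) = M i := by
  ext l
  simp [Matrix.mulVec_single]

lemma le_lev {n d : ℕ} (M : Matrix (Fin n) (Fin d) ℝ) (i : Fin n) (t : ℝ)
    (h : ∀ z, Mᵀ *ᵥ z = M i → t ≤ ∑ k, (z k) ^ 2) : t ≤ lev M i :=
  le_csInf ⟨_, Pi.single i 1, sol_single M i, rfl⟩ (by rintro b ⟨z, hz, rfl⟩; exact h z hz)

/-- existence of a solution orthogonal to the kernel -/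
lemma exists_perp_sol {n d : ℕ} (A : Matrix (Fin n) (Fin d) ℝ) (v : Fin n → ℝ) :
    ∃ z₀ : Fin n → ℝ, Aᵀ *ᵥ z₀ = Aᵀ *ᵥ v ∧
      ∀ k : Fin n → ℝ, Aᵀ *ᵥ k = 0 → ∑ m, z₀ m * k m = 0 := by
  classical
  set f : (EuclideanSpace ℝ (Fin n)) →ₗ[ℝ] (Fin d → ℝ) :=
    (Matrix.mulVecLin Aᵀ) ∘ₗ (WithLp.linearEquiv 2 ℝ (Fin n → ℝ)).toLinearMap with hf
  set K : Submodule ℝ (EuclideanSpace ℝ (Fin n)) := LinearMap.ker f with hK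
  haveI : CompleteSpace K := inferInstance
  haveI : K.HasOrthogonalProjection := inferInstance
  set e : EuclideanSpace ℝ (Fin n) := (WithLp.equiv 2 (Fin n → ℝ)).symm v with he
  set z : EuclideanSpace ℝ (Fin n) := e - ↑((K.orthogonalProjectionOnto) e) with hz
  have hmem : z ∈ Kᗮ := K.sub_starProjection_mem_orthogonal e
  refine ⟨(WithLp.equiv 2 (Fin n → ℝ)) z, ?_, ?_⟩
  · have hker : f ↑((K.orthogonalProjectionOnto) e) = 0 := ((K.orthogonalProjectionOnto) e).2
    have h3 : f z = f e - f ↑((K.orthogonalProjectionOnto) e) := by rw [hz, map_sub]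
    rw [hker, sub_zero] at h3
    simpa [hf, Matrix.mulVecLin, he, Matrix.mulVec_transpose] using h3
  · intro k hk
    have hkK : ((WithLp.equiv 2 (Fin n → ℝ)).symm k) ∈ K := by
      simp only [hK, LinearMap.mem_ker, hf]
      simpa [Matrix.mulVecLin, Matrix.mulVec_transpose] using hk
    have h1 := (Submodule.mem_orthogonal K z).mp hmem _ hkK
    rw [real_inner_comm] at h1
    have h2 : ∑ m, z m * k m = 0 := by
      simpa [PiLp.inner_apply, RCLike.inner_apply, conj_trivial, mul_comm] using h1
    exact h2

set_option maxHeartbeats 1000000 in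
theorem stmt11 {n d : ℕ} (A : Matrix (Fin n) (Fin d) ℝ) (γ : ℝ)
    (hγ0 : 0 < γ) (hγ1 : γ < 1) (i : Fin n)
    (w : Fin n → ℝ) (hwi : w i = Real.sqrt (1 - γ)) (hwj : ∀ j ≠ i, w j = 1)
    (x : Fin n → ℝ) (hx : Aᵀ *ᵥ x = A i) (hxmin : ∑ k, (x k) ^ 2 = lev A i) :
    ∀ j, j ≠ i →
      lev (Matrix.diagonal w * A) j * (1 - γ * lev A i) =
        lev A j * (1 - γ * lev A i) + γ * (x j) ^ 2 ∧
      lev A j ≤ lev (Matrix.diagonal w * A) j := by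
  classical
  have h1γ : (0:ℝ) < 1 - γ := by linarith
  set τ : ℝ := lev A i with hτdef
  clear_value τ
  have hsingle : ∀ (z : Fin n → ℝ) (a : Fin n),
      ∑ m, z m * (Pi.single a 1 : Fin n → ℝ) m = z a := by
    intro z a
    rw [Finset.sum_eq_single a]
    · simp
    · intro b _ hb; simp [Pi.single_apply, hb]
    · simp
  have hτ1 : τ ≤ 1 := by
    have h := lev_le A i _ (sol_single A i)
    have h1 : ∑ k, ((Pi.single i 1 : Fin n → ℝ) k) ^ 2 = 1 := by
      rw [Finset.sum_eq_single i]
      · simp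
      · intro b _ hb; simp [Pi.single_apply, hb]
      · simp
    rw [h1] at h; rw [hτdef]; exact h
  have hτ0 : (0:ℝ) ≤ τ := by
    rw [hτdef]; exact le_lev A i 0 (fun z _ => by positivity)
  have hD : (0:ℝ) < 1 - γ * τ := by nlinarith
  have hDne : (1 - γ * τ) ≠ 0 := ne_of_gt hD
  -- x is orthogonal to the kernel
  have hperp : ∀ k : Fin n → ℝ, Aᵀ *ᵥ k = 0 → ∑ m, x m * k m = 0 := by
    intro k hk
    have hK2 : (0:ℝ) ≤ ∑ m, (k m) ^ 2 := by positivity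
    rcases hK2.lt_or_eq with hpos | h0
    · set K2 : ℝ := ∑ m, (k m) ^ 2 with hK2def
      set c : ℝ := ∑ m, x m * k m with hcdef
      have hsol : Aᵀ *ᵥ (fun m => x m - (c/K2) * k m) = A i := by
        have e1 : (fun m => x m - (c/K2) * k m) = x - (c/K2) • k := by
          funext m; simp [smul_eq_mul]
        rw [e1, Matrix.mulVec_sub, Matrix.mulVec_smul, hk, hx]
        simp
      have hle := lev_le A i _ hsol
      have hexp : ∑ m, (x m - (c/K2) * k m) ^ 2 = τ - c^2/K2 := by
        have e2 : ∀ m, (x m - (c/K2)*k m)^2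
            = x m^2 - 2*(c/K2)*(x m * k m) + (c/K2)^2 * (k m)^2 := fun m => by ring
        rw [Finset.sum_congr rfl (fun m _ => e2 m)]
        rw [Finset.sum_add_distrib, Finset.sum_sub_distrib, ← Finset.mul_sum, ← Finset.mul_sum,
          hxmin, ← hcdef, ← hK2def]
        field_simp
        ring
      rw [hexp] at hle
      have hc2 : c^2/K2 ≤ 0 := by linarith
      have hc2' : c^2 ≤ 0 := by
        by_contra hcon
        push_neg at hcon
        exact absurd (div_pos hcon hpos) (not_lt.mpr hc2)
      exact pow_eq_zero_iff two_ne_zero |>.mp (le_antisymm hc2' (sq_nonneg c))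
    · have hk0 : ∀ m, k m = 0 := by
        intro m
        have := (Finset.sum_eq_zero_iff_of_nonneg (fun m _ => sq_nonneg (k m))).mp h0.symm
          m (Finset.mem_univ m)
        exact pow_eq_zero_iff two_ne_zero |>.mp this
      simp [hk0]
  -- r := e_i - x
  set r : Fin n → ℝ := Pi.single i 1 - x with hrdef
  have hrm : ∀ m, r m = (Pi.single i 1 : Fin n → ℝ) m - x m := fun m => by
    rw [hrdef]; simp [Pi.sub_apply]
  have hrK : Aᵀ *ᵥ r = 0 := by
    rw [hrdef, Matrix.mulVec_sub, sol_single, hx, sub_self]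
  clear_value r
  have hxi : x i = τ := by
    have h1 := hperp r hrK
    have e3 : ∀ m : Fin n, x m * r m
        = x m * (Pi.single i 1 : Fin n → ℝ) m - (x m)^2 := fun m => by rw [hrm m]; ring
    have h2 : ∑ m, x m * r m = x i - ∑ m, (x m)^2 := by
      rw [Finset.sum_congr rfl (fun m _ => e3 m), Finset.sum_sub_distrib, hsingle]
    rw [h1, hxmin] at h2
    linarith
  have hri : r i = 1 - τ := by
    rw [hrm i]; simp [hxi]
  have hρ : ∑ m, (r m)^2 = 1 - τ := by
    have e3 : ∀ m : Fin n, (r m)^2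
        = r m * (Pi.single i 1 : Fin n → ℝ) m - r m * x m := fun m => by
      rw [hrm m]; ring
    have h2 : ∑ m, r m * x m = 0 := by
      rw [← hperp r hrK]
      exact Finset.sum_congr rfl fun m _ => mul_comm _ _
    rw [Finset.sum_congr rfl (fun m _ => e3 m), Finset.sum_sub_distrib, hsingle, h2, hri,
      sub_zero]
  intro j hj
  -- z₀ : min-norm solution for row j
  obtain ⟨z₀, hz0sol', hz0perp⟩ := exists_perp_sol A (Pi.single j 1)
  have hz0sol : Aᵀ *ᵥ z₀ = A j := by rw [hz0sol', sol_single]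
  have hz0min : lev A j = ∑ m, (z₀ m)^2 := by
    refine le_antisymm (lev_le A j z₀ hz0sol) ?_
    apply le_lev
    intro z hz
    have hkK : Aᵀ *ᵥ (z - z₀) = 0 := by rw [Matrix.mulVec_sub, hz, hz0sol, sub_self]
    have hcross := hz0perp _ hkK
    have e3 : ∀ m : Fin n, (z m)^2
        = (z₀ m)^2 + 2*(z₀ m * (z - z₀) m) + ((z - z₀) m)^2 := fun m => by
      simp only [Pi.sub_apply]; ring
    have hexp : ∑ m, (z m)^2 = ∑ m, (z₀ m)^2 + 2*(∑ m, z₀ m * (z - z₀) m)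
        + ∑ m, ((z - z₀) m)^2 := by
      rw [Finset.sum_congr rfl (fun m _ => e3 m), Finset.sum_add_distrib,
        Finset.sum_add_distrib, ← Finset.mul_sum]
    rw [hexp, hcross]
    have hnn : (0:ℝ) ≤ ∑ m, ((z - z₀) m)^2 := by positivity
    linarith
  have hs : z₀ i = x j := by
    have e1 : z₀ i = ∑ m, z₀ m * x m := by
      have h0 := hz0perp r hrK
      have e3 : ∀ m : Fin n, z₀ m * r m
          = z₀ m * (Pi.single i 1 : Fin n → ℝ) m - z₀ m * x m := fun m => by
        rw [hrm m]; ring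
      have h2 : ∑ m, z₀ m * r m = z₀ i - ∑ m, z₀ m * x m := by
        rw [Finset.sum_congr rfl (fun m _ => e3 m), Finset.sum_sub_distrib, hsingle]
      rw [h0] at h2; linarith
    have e2 : x j = ∑ m, x m * z₀ m := by
      have hker : Aᵀ *ᵥ (Pi.single j 1 - z₀) = 0 := by
        rw [Matrix.mulVec_sub, sol_single, hz0sol, sub_self]
      have h0 := hperp _ hker
      have e3 : ∀ m : Fin n, x m * (Pi.single j 1 - z₀ : Fin n → ℝ) m
          = x m * (Pi.single j 1 : Fin n → ℝ) m - x m * z₀ m := fun m => by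
        simp only [Pi.sub_apply]; ring
      have h2 : ∑ m, x m * (Pi.single j 1 - z₀ : Fin n → ℝ) m
          = x j - ∑ m, x m * z₀ m := by
        rw [Finset.sum_congr rfl (fun m _ => e3 m), Finset.sum_sub_distrib, hsingle]
      rw [h0] at h2; linarith
    rw [e1, e2]
    exact Finset.sum_congr rfl fun m _ => mul_comm _ _
  -- properties of w and B
  have hwne : ∀ m, w m ≠ 0 := by
    intro m
    by_cases hmi : m = i
    · rw [hmi, hwi]
      exact (Real.sqrt_pos.mpr h1γ).ne'
    · rw [hwj m hmi]; exact one_ne_zero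
  have hwi2 : (w i)^2 = 1 - γ := by rw [hwi, Real.sq_sqrt h1γ.le]
  have hBj : (Matrix.diagonal w * A) j = A j := by
    funext l; rw [Matrix.diagonal_mul, hwj j hj, one_mul]
  have hBt : ∀ y : Fin n → ℝ, (Matrix.diagonal w * A)ᵀ *ᵥ y
      = Aᵀ *ᵥ (fun m => w m * y m) := by
    intro y; ext l
    simp only [Matrix.mulVec, dotProduct, Matrix.transpose_apply, Matrix.diagonal_mul]
    exact Finset.sum_congr rfl fun m _ => by ring
  have hsum : ∀ zz : Fin n → ℝ,
      ∑ k', ((zz k') / w k')^2 = (∑ k', (zz k')^2) + (γ/(1-γ)) * (zz i)^2 := by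
    intro zz
    have h1 : ∑ k', (((zz k')/w k')^2 - (zz k')^2) = (γ/(1-γ)) * (zz i)^2 := by
      rw [Finset.sum_eq_single i]
      · rw [div_pow, hwi2]; field_simp; ring
      · intro b _ hb; rw [hwj b hb]; simp
      · simp
    rw [Finset.sum_sub_distrib] at h1
    linarith
  -- the key value computation
  have key : lev (Matrix.diagonal w * A) j = lev A j + γ * (x j)^2 / (1 - γ * τ) := by
    apply le_antisymm
    · -- upper bound via explicit candidate
      set t : ℝ := -(γ * x j)/(1 - γ*τ) with ht
      set z : Fin n → ℝ := fun m => z₀ m + t * r m with hzdef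
      have hzm : ∀ m, z m = z₀ m + t * r m := fun m => by rw [hzdef]
      clear_value z
      have hzsol : Aᵀ *ᵥ z = A j := by
        have e1 : z = z₀ + t • r := by funext m; rw [hzm m]; simp [smul_eq_mul]
        rw [e1, Matrix.mulVec_add, Matrix.mulVec_smul, hrK, hz0sol]
        simp
      have hysol : (Matrix.diagonal w * A)ᵀ *ᵥ (fun m => z m / w m)
          = (Matrix.diagonal w * A) j := by
        rw [hBt, hBj]
        have e2 : (fun m => w m * (z m / w m)) = z := by
          funext m; rw [mul_div_cancel₀ _ (hwne m)]
        rw [e2, hzsol]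
      have hle := lev_le _ j _ hysol
      have hval : ∑ k', (z k' / w k')^2 = lev A j + γ * (x j)^2 / (1 - γ * τ) := by
        rw [hsum z]
        have e3 : ∀ m, (z m)^2 = (z₀ m)^2 + 2*t*(z₀ m * r m) + t^2*(r m)^2 :=
          fun m => by rw [hzm m]; ring
        have hz2 : ∑ k', (z k')^2 = lev A j + t^2*(1-τ) := by
          rw [Finset.sum_congr rfl (fun m _ => e3 m), Finset.sum_add_distrib,
            Finset.sum_add_distrib, ← Finset.mul_sum, ← Finset.mul_sum,
            hz0perp r hrK, hρ, ← hz0min]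
          ring
        have hzi : z i = x j + t*(1-τ) := by
          rw [hzm i, hs, hri]
        rw [hz2, hzi, ht]
        field_simp
        ring
      rw [← hval]; exact hle
    · -- lower bound
      apply le_lev
      intro y hy
      have hzsol : Aᵀ *ᵥ (fun m => w m * y m) = A j := by rw [← hBt, hy, hBj]
      set z : Fin n → ℝ := fun m => w m * y m with hzdef
      have hyz : ∀ m, y m = z m / w m := fun m => by
        rw [hzdef]; rw [mul_div_cancel_left₀ _ (hwne m)]
      clear_value z
      have hval : ∑ k', (y k')^2 = (∑ k', (z k')^2) + (γ/(1-γ))*(z i)^2 := by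
        rw [Finset.sum_congr rfl (fun m _ => by rw [hyz m])]
        exact hsum z
      set k : Fin n → ℝ := fun m => z m - z₀ m with hkdef
      have hkm : ∀ m, k m = z m - z₀ m := fun m => by rw [hkdef]
      clear_value k
      have hkK : Aᵀ *ᵥ k = 0 := by
        have e1 : k = z - z₀ := by funext m; rw [hkm m]; simp [Pi.sub_apply]
        rw [e1, Matrix.mulVec_sub, hzsol, hz0sol, sub_self]
      set Kq : ℝ := ∑ m, (k m)^2 with hKq
      have hKq0 : (0:ℝ) ≤ Kq := by
        rw [hKq]; positivity
      clear_value Kq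
      set u : ℝ := k i with hu
      clear_value u
      have hz2 : ∑ m, (z m)^2 = lev A j + Kq := by
        have e3 : ∀ m, (z m)^2 = (z₀ m)^2 + 2*(z₀ m * k m) + (k m)^2 := fun m => by
          rw [hkm m]; ring
        rw [Finset.sum_congr rfl (fun m _ => e3 m), Finset.sum_add_distrib,
          Finset.sum_add_distrib, ← Finset.mul_sum, hz0perp k hkK, ← hKq, ← hz0min]
        ring
      have hzi : z i = x j + u := by
        rw [hu, hkm i, hs]; ring
      have hu2 : u^2 ≤ Kq * (1-τ) := by
        have h0 : ∑ m, k m * x m = 0 := by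
          rw [← hperp k hkK]
          exact Finset.sum_congr rfl fun m _ => mul_comm _ _
        have e3 : ∀ m : Fin n, k m * r m
            = k m * (Pi.single i 1 : Fin n → ℝ) m - k m * x m := fun m => by
          rw [hrm m]; ring
        have hukr : u = ∑ m, k m * r m := by
          rw [Finset.sum_congr rfl (fun m _ => e3 m), Finset.sum_sub_distrib, hsingle,
            h0, sub_zero, hu]
        rw [hukr, ← hρ, hKq]
        exact Finset.sum_mul_sq_le_sq_mul_sq Finset.univ k r
      rw [hval, hz2, hzi]
      have main : γ * (x j)^2 / (1 - γ*τ) ≤ Kq + (γ/(1-γ))*(x j + u)^2 := by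
        rcases hτ1.lt_or_eq with hlt | heq
        · have hρpos : (0:ℝ) < 1 - τ := by linarith
          have hid : ((Kq*(1-γ) + γ*(x j + u)^2)*(1-γ*τ) - γ*(x j)^2*(1-γ)) * (1-τ)
              = (1-γ)*(1-γ*τ)*(Kq*(1-τ) - u^2)
                + ((1-γ*τ)*u + γ*(x j)*(1-τ))^2 := by ring
          have h₁ : (0:ℝ) ≤ (1-γ)*(1-γ*τ)*(Kq*(1-τ) - u^2) :=
            mul_nonneg (mul_nonneg h1γ.le hD.le) (sub_nonneg.mpr hu2)
          have h₂ : (0:ℝ) ≤ ((1-γ*τ)*u + γ*(x j)*(1-τ))^2 := sq_nonneg _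
          have h₃ : (0:ℝ) ≤ ((Kq*(1-γ) + γ*(x j + u)^2)*(1-γ*τ)
              - γ*(x j)^2*(1-γ)) * (1-τ) := by rw [hid]; linarith
          have h₃' : (0:ℝ) ≤ (1-τ) * ((Kq*(1-γ) + γ*(x j + u)^2)*(1-γ*τ)
              - γ*(x j)^2*(1-γ)) := by rw [mul_comm]; exact h₃
          have h₄ : (0:ℝ) ≤ (Kq*(1-γ) + γ*(x j + u)^2)*(1-γ*τ) - γ*(x j)^2*(1-γ) :=
            nonneg_of_mul_nonneg_right h₃' hρpos
          rw [div_le_iff₀ hD]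
          have e4 : Kq + γ/(1-γ)*(x j + u)^2
              = (Kq*(1-γ) + γ*(x j + u)^2)/(1-γ) := by field_simp
          rw [e4, div_mul_eq_mul_div, le_div_iff₀ h1γ]
          linarith
        · -- τ = 1
          have hτeq : (1:ℝ) - τ = 0 := by rw [heq]; ring
          have hu2' : u^2 ≤ 0 := by rw [hτeq, mul_zero] at hu2; exact hu2
          have hu0 : u = 0 :=
            pow_eq_zero_iff two_ne_zero |>.mp (le_antisymm hu2' (sq_nonneg u))
          rw [hu0, add_zero, div_le_iff₀ hD]
          have hγτ : 1 - γ*τ = 1 - γ := by rw [heq, mul_one]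
          rw [hγτ]
          have e6 : (Kq + γ/(1-γ)*(x j)^2) * (1-γ) = Kq*(1-γ) + γ*(x j)^2 := by
            field_simp
          rw [e6]
          linarith [mul_nonneg hKq0 h1γ.le]
      linarith
  refine ⟨?_, ?_⟩
  · rw [key, add_mul, div_mul_cancel₀ _ hDne]
  · rw [key]
    have hpos : (0:ℝ) ≤ γ * (x j)^2 / (1 - γ*τ) := by positivity
    linarith
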